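/- For every metric space (X,d) and all x, y, x₀ ∈ X, the limit lim_{s→∞} exp(s − (γ_x(s)|γ_y(s))_{γ_{∞,x₀}(s)}) (Gromov products taken in Con(X)) exists and equals d(x,y). Consequently, d is a parabolic visual metric (with parameter e) on the punctured boundary of Con(X) based at the vertical direction [γ_∞]. -/
import Mathlib


/-- The Bonk–Schramm cone distance on `X × (0,∞)`. -/
noncomputable def dCon {X : Type*} [MetricSpace X] (p q : X × ℝ) : ℝ :=
  2 * Real.log ((dist p.1 q.1 + max p.2 q.2) / Real.sqrt (p.2 * q.2))

/-- The Gromov product `(p|p′)_q` in `Con(X)`, with respect to the metric `d_Con`. -/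
noncomputable def gromovCon {X : Type*} [MetricSpace X] (p p' q : X × ℝ) : ℝ :=
  (dCon p q + dCon q p' - dCon p p') / 2

/-- For every metric space `(X,d)` and all `x, y, x₀ ∈ X`, the limit
`lim_{s→∞} exp(s − (γ_x(s)|γ_y(s))_{γ_{∞,x₀}(s)})` exists and equals `d(x,y)`.
Consequently `d` is a parabolic visual metric (with parameter `e`) on the punctured
boundary of `Con(X)` based at the vertical direction. -/
theorem stmt_6 {X : Type*} [MetricSpace X] (x y x₀ : X) :
    Filter.Tendsto
      (fun s : ℝ =>
        Real.exp (s - gromovCon (x, Real.exp (-s)) (y, Real.exp (-s)) (x₀, Real.exp s)))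
      Filter.atTop (nhds (dist x y)) := by
  have hmain : Filter.Tendsto
      (fun s : ℝ => (dist x y + Real.exp (-s)) * (1 + dist x x₀ * Real.exp (-s))⁻¹ *
        (1 + dist x₀ y * Real.exp (-s))⁻¹) Filter.atTop (nhds (dist x y)) := by
    have he : Filter.Tendsto (fun s : ℝ => Real.exp (-s)) Filter.atTop (nhds 0) :=
      Real.tendsto_exp_neg_atTop_nhds_zero
    have h1 : Filter.Tendsto (fun s : ℝ => dist x y + Real.exp (-s)) Filter.atTop
        (nhds (dist x y)) := by
      simpa using (tendsto_const_nhds.add he)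
    have h2 : Filter.Tendsto (fun s : ℝ => (1 + dist x x₀ * Real.exp (-s))⁻¹) Filter.atTop
        (nhds 1) := by
      have : Filter.Tendsto (fun s : ℝ => 1 + dist x x₀ * Real.exp (-s)) Filter.atTop
          (nhds 1) := by simpa using (tendsto_const_nhds.add (tendsto_const_nhds.mul he))
      simpa using this.inv₀ one_ne_zero
    have h3 : Filter.Tendsto (fun s : ℝ => (1 + dist x₀ y * Real.exp (-s))⁻¹) Filter.atTop
        (nhds 1) := by
      have : Filter.Tendsto (fun s : ℝ => 1 + dist x₀ y * Real.exp (-s)) Filter.atTop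
          (nhds 1) := by simpa using (tendsto_const_nhds.add (tendsto_const_nhds.mul he))
      simpa using this.inv₀ one_ne_zero
    simpa using (h1.mul h2).mul h3
  refine hmain.congr' ?_
  filter_upwards [Filter.eventually_ge_atTop (0 : ℝ)] with s hs
  have hE : (0 : ℝ) < Real.exp s := Real.exp_pos s
  have he : (0 : ℝ) < Real.exp (-s) := Real.exp_pos _
  have hle : Real.exp (-s) ≤ Real.exp s := Real.exp_le_exp.mpr (by linarith)
  have hprod : Real.exp (-s) * Real.exp s = 1 := by
    rw [← Real.exp_add]; simp
  have hsqrt1 : Real.sqrt (Real.exp (-s) * Real.exp s) = 1 := by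
    rw [hprod, Real.sqrt_one]
  have hsqrt1' : Real.sqrt (Real.exp s * Real.exp (-s)) = 1 := by
    rw [mul_comm, hprod, Real.sqrt_one]
  have hsqrt2 : Real.sqrt (Real.exp (-s) * Real.exp (-s)) = Real.exp (-s) :=
    Real.sqrt_mul_self he.le
  have d1 : (0:ℝ) ≤ dist x x₀ := dist_nonneg
  have d2 : (0:ℝ) ≤ dist x₀ y := dist_nonneg
  have d3 : (0:ℝ) ≤ dist x y := dist_nonneg
  -- unfold the Gromov product
  have hg : gromovCon (x, Real.exp (-s)) (y, Real.exp (-s)) (x₀, Real.exp s)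
      = Real.log (dist x x₀ + Real.exp s) + Real.log (dist x₀ y + Real.exp s)
        - (Real.log (dist x y + Real.exp (-s)) - Real.log (Real.exp (-s))) := by
    simp only [gromovCon, dCon]
    rw [hsqrt1, hsqrt1', hsqrt2, max_eq_right hle, max_eq_left hle, max_self]
    rw [div_one, div_one, Real.log_div (by positivity) (by positivity)]
    ring
  rw [hg]
  have hexp : s - (Real.log (dist x x₀ + Real.exp s) + Real.log (dist x₀ y + Real.exp s)
        - (Real.log (dist x y + Real.exp (-s)) - Real.log (Real.exp (-s))))
      = (2 * s + Real.log (dist x y + Real.exp (-s)))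
        - (Real.log (dist x x₀ + Real.exp s) + Real.log (dist x₀ y + Real.exp s)) := by
    rw [Real.log_exp]; ring
  rw [hexp, Real.exp_sub, Real.exp_add, Real.exp_add, Real.exp_log (by positivity),
    Real.exp_log (by positivity), Real.exp_log (by positivity)]
  have h2s : Real.exp (2 * s) = Real.exp s * Real.exp s := by
    rw [two_mul, Real.exp_add]
  rw [h2s]
  have hne1 : (1 : ℝ) + dist x x₀ * Real.exp (-s) ≠ 0 := by positivity
  have hne2 : (1 : ℝ) + dist x₀ y * Real.exp (-s) ≠ 0 := by positivity
  rw [Real.exp_neg]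
  have hEne : Real.exp s ≠ 0 := hE.ne'
  field_simp
  ring
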